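/- Let (A,∘,B) be a finite-dimensional quadratic Novikov algebra, J a nonzero isotropic ideal, V a complement of J^⊥ in A, and S = J ⊕ V. Define on S^⊥ the product x⋄y as the S^⊥-component of x∘y in the decomposition J^⊥ = J ⊕ S^⊥. Then (S^⊥, ⋄, B restricted to S^⊥ × S^⊥) is a quadratic Novikov algebra isomorphic (as quadratic Novikov algebra) to the quotient quadratic Novikov algebra (J^⊥/J, ∘̄, B̄), via the map sending x ∈ S^⊥ to its class x̄ ∈ J^⊥/J. -/

import Mathlib

/-- With J a nonzero isotropic ideal, V a complement of J^⊥ and S = J ⊔ V,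
the product ⋄ on S^⊥ given by the S^⊥-component of ∘ (in J^⊥ = J ⊕ S^⊥) makes
(S^⊥, ⋄, B|_{S^⊥×S^⊥}) a quadratic Novikov algebra, and x ↦ x̄ ∈ J^⊥/J is an
isomorphism of quadratic Novikov algebras onto the quotient (J^⊥/J, ∘̄, B̄): it is
injective, has image J^⊥/J, intertwines ⋄ with the induced quotient product, and
preserves the bilinear forms (B̄(x̄,ȳ) = B(x,y)). -/
theorem quadratic_novikov_perp_complement_iso_quotient
    {k A : Type*} [Field k] [CharZero k] [AddCommGroup A] [Module k A]
    [FiniteDimensional k A]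
    (mul : A →ₗ[k] A →ₗ[k] A) (B : LinearMap.BilinForm k A)
    (hnov1 : ∀ a b c, mul (mul a b) c - mul a (mul b c) = mul (mul b a) c - mul b (mul a c))
    (hnov2 : ∀ a b c, mul (mul a b) c = mul (mul a c) b)
    (hsym : ∀ a b, B a b = B b a)
    (hnd : ∀ a, (∀ b, B a b = 0) → a = 0)
    (hinv : ∀ a b c, B (mul a b) c = -(B b (mul a c + mul c a)))
    (J : Submodule k A) (hJne : J ≠ ⊥)
    (hJideal : ∀ a ∈ J, ∀ x : A, mul a x ∈ J ∧ mul x a ∈ J)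
    (hJiso : ∀ x ∈ J, ∀ y ∈ J, B x y = 0)
    (V : Submodule k A) (hV : IsCompl (B.orthogonal J) V)
    (S : Submodule k A) (hS : S = J ⊔ V) :
    ∃ dmul : (B.orthogonal S) → (B.orthogonal S) → (B.orthogonal S),
      -- dmul x y is the S^⊥-component of x∘y : x∘y - x⋄y ∈ J
      (∀ x y : B.orthogonal S, (mul (x : A) (y : A) - (dmul x y : A)) ∈ J) ∧
      -- (S^⊥, ⋄) is a Novikov algebra
      (∀ x y z : B.orthogonal S,
        ((dmul (dmul x y) z : A) - (dmul x (dmul y z) : A))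
          = ((dmul (dmul y x) z : A) - (dmul y (dmul x z) : A))) ∧
      (∀ x y z : B.orthogonal S, dmul (dmul x y) z = dmul (dmul x z) y) ∧
      -- B restricted to S^⊥ is nondegenerate and invariant for ⋄
      (∀ x : B.orthogonal S, (∀ y : B.orthogonal S, B (x : A) (y : A) = 0) → x = 0) ∧
      (∀ x y z : B.orthogonal S,
        B ((dmul x y : A)) (z : A)
          = -(B (y : A) ((dmul x z : A) + (dmul z x : A)))) ∧
      -- x ↦ x̄ is an isomorphism of quadratic Novikov algebras onto J^⊥/J:
      Function.Injective
        (fun x : B.orthogonal S => (Submodule.Quotient.mk (x : A) : A ⧸ J)) ∧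
      (Set.range (fun x : B.orthogonal S => (Submodule.Quotient.mk (x : A) : A ⧸ J))
        = (Submodule.Quotient.mk : A → A ⧸ J) '' (B.orthogonal J : Set A)) ∧
      -- it intertwines ⋄ with the quotient product (x̄ ∘̄ ȳ = overline{x∘y}), and the
      -- quotient form B̄(x̄,ȳ) = B(x,y) is preserved by definition of B̄
      (∀ x y : B.orthogonal S,
        (Submodule.Quotient.mk ((dmul x y : A)) : A ⧸ J)
          = Submodule.Quotient.mk (mul (x : A) (y : A))) := by
  classical
  have hrefl : B.IsRefl := fun x y h => by rw [hsym]; exact h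
  have hndB : B.Nondegenerate :=
    (LinearMap.IsRefl.nondegenerate_iff_separatingLeft hrefl).mpr (fun m h => hnd m h)
  set Sp := B.orthogonal S with hSpdef
  -- basic inclusions
  have hJle : J ≤ B.orthogonal J := fun x hx => fun n hn => hJiso n hn x hx
  have hJS : J ≤ S := by rw [hS]; exact le_sup_left
  have hVS : V ≤ S := by rw [hS]; exact le_sup_right
  have hSpLe : Sp ≤ B.orthogonal J := B.orthogonal_le hJS
  -- B y j = 0 for y ∈ J^⊥, j ∈ J
  have hBr : ∀ y ∈ B.orthogonal J, ∀ j ∈ J, B y j = 0 := fun y hy j hj => by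
    rw [hsym]; exact hy j hj
  -- J ⊓ Sp = ⊥ (pointwise)
  have hJSp : ∀ x, x ∈ J → x ∈ Sp → x = 0 := by
    intro x hxJ hxSp
    apply hnd
    intro b
    obtain ⟨u, hu, v, hv, rfl⟩ := Submodule.mem_sup.mp
      (by rw [hV.sup_eq_top]; trivial : b ∈ B.orthogonal J ⊔ V)
    have h1 : B x u = 0 := hu x hxJ
    have h2 : B x v = 0 := by rw [hsym]; exact hxSp v (hVS hv)
    rw [map_add, h1, h2, add_zero]
  have hmodJ : ∀ p q : Sp, ((p : A) - (q : A)) ∈ J → (p : A) = (q : A) := by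
    intro p q h
    have hm : ((p : A) - q) ∈ Sp := sub_mem p.2 q.2
    exact sub_eq_zero.mp (hJSp _ h hm)
  -- mul maps Sp × Sp into J^⊥
  have hmulperp : ∀ x y : Sp, mul (x : A) (y : A) ∈ B.orthogonal J := by
    intro x y n hn
    have h : B (mul (x : A) (y : A)) (n : A) = 0 := by
      rw [hinv]
      have hmem : mul (x : A) n + mul n (x : A) ∈ J :=
        add_mem (hJideal n hn (x : A)).2 (hJideal n hn (x : A)).1
      rw [hBr (y : A) (hSpLe y.2) _ hmem, neg_zero]
    rw [hsym] at h; exact h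
  -- dimension count : J ⊔ Sp = J^⊥
  have hJinfV : J ⊓ V = ⊥ := (hV.disjoint.mono_left hJle).eq_bot
  have hJV : Module.finrank k (B.orthogonal J) + Module.finrank k V = Module.finrank k A := by
    have h := Submodule.finrank_sup_add_finrank_inf_eq (B.orthogonal J) V
    rw [hV.sup_eq_top, hV.disjoint.eq_bot, finrank_top, finrank_bot, add_zero] at h
    omega
  have hfJperp : Module.finrank k (B.orthogonal J)
      = Module.finrank k A - Module.finrank k J :=
    LinearMap.BilinForm.finrank_orthogonal hndB J
  have hfS : Module.finrank k S = Module.finrank k J + Module.finrank k V := by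
    have h := Submodule.finrank_sup_add_finrank_inf_eq J V
    rw [hJinfV, finrank_bot, add_zero] at h
    rw [hS]; omega
  have hfSp : Module.finrank k Sp = Module.finrank k A - Module.finrank k S :=
    LinearMap.BilinForm.finrank_orthogonal hndB S
  have hJinfSp : J ⊓ Sp = ⊥ := by
    rw [eq_bot_iff]; intro x hx
    exact (Submodule.mem_bot k).mpr (hJSp x hx.1 hx.2)
  have hsupEq : J ⊔ Sp = B.orthogonal J := by
    apply Submodule.eq_of_le_of_finrank_le (sup_le hJle hSpLe)
    have h1 := Submodule.finrank_sup_add_finrank_inf_eq J Sp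
    rw [hJinfSp, finrank_bot, add_zero] at h1
    have h2 : Module.finrank k S ≤ Module.finrank k A := Submodule.finrank_le S
    have h3 : Module.finrank k J ≤ Module.finrank k A := Submodule.finrank_le J
    omega
  -- definition of dmul
  have hdec : ∀ x y : Sp, ∃ p : Sp, mul (x : A) (y : A) - (p : A) ∈ J := by
    intro x y
    have hm : mul (x : A) (y : A) ∈ J ⊔ Sp := hsupEq ▸ hmulperp x y
    obtain ⟨j, hj, p, hp, heq⟩ := Submodule.mem_sup.mp hm
    exact ⟨⟨p, hp⟩, by rw [← heq]; simpa using hj⟩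
  set d : Sp → Sp → Sp := fun x y => (hdec x y).choose with hd
  have key : ∀ x y : Sp, mul (x : A) (y : A) - (d x y : A) ∈ J := fun x y =>
    (hdec x y).choose_spec
  -- d (d x y) z ≡ mul (mul x y) z mod J, and similarly on the right
  have hL : ∀ x y z : Sp, (d (d x y) z : A) - mul (mul (x : A) (y : A)) (z : A) ∈ J := by
    intro x y z
    have h1 : mul ((d x y : A)) (z : A) - (d (d x y) z : A) ∈ J := key (d x y) z
    have h2 : mul (mul (x : A) (y : A) - (d x y : A)) (z : A) ∈ J :=
      (hJideal _ (key x y) (z : A)).1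
    rw [map_sub, LinearMap.sub_apply] at h2
    have e : (d (d x y) z : A) - mul (mul (x : A) (y : A)) (z : A)
        = -((mul ((d x y : A)) (z : A) - (d (d x y) z : A))
            + (mul (mul (x : A) (y : A)) (z : A) - mul ((d x y : A)) (z : A))) := by abel
    rw [e]
    exact neg_mem (add_mem h1 h2)
  have hR : ∀ x y z : Sp, (d x (d y z) : A) - mul (x : A) (mul (y : A) (z : A)) ∈ J := by
    intro x y z
    have h1 : mul (x : A) ((d y z : A)) - (d x (d y z) : A) ∈ J := key x (d y z)
    have h2 : mul (x : A) (mul (y : A) (z : A) - (d y z : A)) ∈ J :=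
      (hJideal _ (key y z) (x : A)).2
    rw [map_sub] at h2
    have e : (d x (d y z) : A) - mul (x : A) (mul (y : A) (z : A))
        = -((mul (x : A) ((d y z : A)) - (d x (d y z) : A))
            + (mul (x : A) (mul (y : A) (z : A)) - mul (x : A) ((d y z : A)))) := by abel
    rw [e]
    exact neg_mem (add_mem h1 h2)
  refine ⟨d, key, ?_, ?_, ?_, ?_, ?_, ?_, ?_⟩
  · -- Novikov identity 1
    intro x y z
    have hDmem : ((d (d x y) z : A) - (d x (d y z) : A))
        - ((d (d y x) z : A) - (d y (d x z) : A)) ∈ J := by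
      have e : ((d (d x y) z : A) - (d x (d y z) : A))
          - ((d (d y x) z : A) - (d y (d x z) : A))
          = (((d (d x y) z : A) - mul (mul (x : A) (y : A)) (z : A))
              - ((d x (d y z) : A) - mul (x : A) (mul (y : A) (z : A)))
            - (((d (d y x) z : A) - mul (mul (y : A) (x : A)) (z : A))
              - ((d y (d x z) : A) - mul (y : A) (mul (x : A) (z : A)))))
            + ((mul (mul (x : A) (y : A)) (z : A) - mul (x : A) (mul (y : A) (z : A)))
              - (mul (mul (y : A) (x : A)) (z : A) - mul (y : A) (mul (x : A) (z : A)))) := by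
        abel
      rw [e, hnov1 (x : A) (y : A) (z : A), sub_self, add_zero]
      exact sub_mem (sub_mem (hL x y z) (hR x y z)) (sub_mem (hL y x z) (hR y x z))
    have hDSp : ((d (d x y) z : A) - (d x (d y z) : A))
        - ((d (d y x) z : A) - (d y (d x z) : A)) ∈ Sp :=
      sub_mem (sub_mem (d (d x y) z).2 (d x (d y z)).2)
        (sub_mem (d (d y x) z).2 (d y (d x z)).2)
    exact sub_eq_zero.mp (hJSp _ hDmem hDSp)
  · -- Novikov identity 2
    intro x y z
    apply Subtype.ext
    apply hmodJ
    have e : (d (d x y) z : A) - (d (d x z) y : A)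
        = ((d (d x y) z : A) - mul (mul (x : A) (y : A)) (z : A))
          - ((d (d x z) y : A) - mul (mul (x : A) (z : A)) (y : A)) := by
      rw [hnov2 (x : A) (y : A) (z : A)]; abel
    rw [e]
    exact sub_mem (hL x y z) (hL x z y)
  · -- nondegeneracy on Sp
    intro x hx
    apply Subtype.ext
    show (x : A) = 0
    apply hnd
    intro b
    have hb : b ∈ (J ⊔ Sp) ⊔ V := by
      rw [hsupEq, hV.sup_eq_top]; trivial
    obtain ⟨u, hu, v, hv, rfl⟩ := Submodule.mem_sup.mp hb
    obtain ⟨j, hj, p, hp, rfl⟩ := Submodule.mem_sup.mp hu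
    have h1 : B (x : A) j = 0 := hBr _ (hSpLe x.2) j hj
    have h2 : B (x : A) p = 0 := hx ⟨p, hp⟩
    have h3 : B (x : A) v = 0 := by rw [hsym]; exact x.2 v (hVS hv)
    rw [map_add, map_add, h1, h2, h3, add_zero, add_zero]
  · -- invariance of B for d
    intro x y z
    have e1 : B ((d x y : A)) (z : A) = B (mul (x : A) (y : A)) (z : A) := by
      have h0 : B (mul (x : A) (y : A) - (d x y : A)) (z : A) = 0 :=
        hrefl _ _ (hBr _ (hSpLe z.2) _ (key x y))
      rw [map_sub, LinearMap.sub_apply, sub_eq_zero] at h0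
      exact h0.symm
    have e2 : B (y : A) ((d x z : A) + (d z x : A))
        = B (y : A) (mul (x : A) (z : A) + mul (z : A) (x : A)) := by
      have hmem : (mul (x : A) (z : A) + mul (z : A) (x : A))
          - ((d x z : A) + (d z x : A)) ∈ J := by
        have e : (mul (x : A) (z : A) + mul (z : A) (x : A))
            - ((d x z : A) + (d z x : A))
            = (mul (x : A) (z : A) - (d x z : A)) + (mul (z : A) (x : A) - (d z x : A)) := by
          abel
        rw [e]
        exact add_mem (key x z) (key z x)
      have h0 : B (y : A) ((mul (x : A) (z : A) + mul (z : A) (x : A))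
          - ((d x z : A) + (d z x : A))) = 0 := hBr _ (hSpLe y.2) _ hmem
      rw [map_sub, sub_eq_zero] at h0
      exact h0.symm
    rw [e1, e2, hinv]
  · -- injectivity
    intro x y h
    apply Subtype.ext
    apply hmodJ
    exact (Submodule.Quotient.eq J).mp h
  · -- range
    ext c
    constructor
    · rintro ⟨x, rfl⟩
      exact ⟨(x : A), hSpLe x.2, rfl⟩
    · rintro ⟨z, hz, rfl⟩
      rw [← hsupEq] at hz
      obtain ⟨j, hj, p, hp, rfl⟩ := Submodule.mem_sup.mp hz
      refine ⟨⟨p, hp⟩, ?_⟩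
      show (Submodule.Quotient.mk p : A ⧸ J) = Submodule.Quotient.mk (j + p)
      rw [Submodule.Quotient.eq]
      simpa using neg_mem hj
  · -- intertwines products
    intro x y
    rw [Submodule.Quotient.eq]
    simpa using neg_mem (key x y)
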